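/- Let ρ > 1, Q > 0, ε ≥ 0, and let integers M ≤ N be given with N ≥ 1. Let f : [-1,1] → ℝ be given by a uniformly convergent Chebyshev series f(x) = Σ_{n≥0} a_n T_n(x) with |a_0| ≤ Q and |a_n| ≤ 2Q ρ^{-n} for n ≥ 1. Let ε_vec ∈ ℝ^{N+1} satisfy ‖ε_vec‖_∞ ≤ ε, let c ∈ ℝ^{M+1} solve the normal equations T_M(x^{equi})ᵀ T_M(x^{equi}) c = T_M(x^{equi})ᵀ (f(x^{equi}) + ε_vec), and set p_M(x) = Σ_{k=0}^M c_k T_k(x). Then sup_{x ∈ [-1,1]} |f(x) − p_M(x)| ≤ 2Q [ 1 + (M+1)(N+1)^{1/2} / σ_{M+1}(T_M(x^{equi})) ] · ρ^{-M}/(ρ−1) + (M+1)(N+1)^{1/2} ε / σ_{M+1}(T_M(x^{equi})). -/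

import Mathlib

open Matrix MeasureTheory
open scoped BigOperators

/-- Chebyshev polynomial of the first kind `T_n`, as a function `ℝ → ℝ`. -/
noncomputable def cheb (n : ℕ) (x : ℝ) : ℝ :=
  (Polynomial.Chebyshev.T ℝ (n : ℤ)).eval x

/-- The equally spaced grid `x_k = 2k/N - 1`, `k = 0, …, N`, on `[-1,1]`. -/
noncomputable def xequi (N : ℕ) (k : Fin (N + 1)) : ℝ :=
  2 * (k : ℝ) / (N : ℝ) - 1

/-- The `(N+1) × (M+1)` Chebyshev–Vandermonde matrix at the equally spaced grid. -/
noncomputable def chebVand (N M : ℕ) : Matrix (Fin (N + 1)) (Fin (M + 1)) ℝ :=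
  Matrix.of fun i j => cheb (j : ℕ) (xequi N i)

/-- The Euclidean norm of a vector in `ℝ^n`. -/
noncomputable def enorm2 {n : ℕ} (v : Fin n → ℝ) : ℝ :=
  Real.sqrt (∑ i, (v i) ^ 2)

/-- The smallest singular value of a matrix, as the infimum of `‖A v‖₂` over unit vectors. -/
noncomputable def sigmaMin {m n : ℕ} (A : Matrix (Fin m) (Fin n) ℝ) : ℝ :=
  sInf {r | ∃ v : Fin n → ℝ, enorm2 v = 1 ∧ r = enorm2 (A.mulVec v)}

/-- The largest singular value of a matrix, as the supremum of `‖A v‖₂` over unit vectors. -/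
noncomputable def sigmaMax {m n : ℕ} (A : Matrix (Fin m) (Fin n) ℝ) : ℝ :=
  sSup {r | ∃ v : Fin n → ℝ, enorm2 v = 1 ∧ r = enorm2 (A.mulVec v)}

section Helpers

open Polynomial Polynomial.Chebyshev

lemma chebT_deg_coeff : ∀ n : ℕ, (T ℝ (n : ℤ)).natDegree ≤ n ∧ (T ℝ (n : ℤ)).coeff n = 2 ^ (n - 1) := by
  intro n
  induction n using Nat.twoStepInduction with
  | zero => simp [T_zero]
  | one => simp [T_one]
  | more n ih1 ih2 =>
    have hcast : ((n + 2 : ℕ) : ℤ) = (n : ℤ) + 2 := by push_cast; ring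
    rw [hcast, T_add_two]
    have h1 : ((n + 1 : ℕ) : ℤ) = (n : ℤ) + 1 := by push_cast; ring
    rw [h1] at ih2
    constructor
    · refine le_trans (natDegree_sub_le _ _) ?_
      simp only [max_le_iff]
      constructor
      · refine le_trans (natDegree_mul_le) ?_
        have : (2 * X : ℝ[X]).natDegree ≤ 1 := by
          refine le_trans (natDegree_mul_le) ?_
          simp
        omega
      · omega
    · have hC : (2 * X * T ℝ ((n:ℤ) + 1)) = C 2 * (X * T ℝ ((n:ℤ)+1)) := by
        rw [← mul_assoc]
        congr 1
      rw [coeff_sub, hC, coeff_C_mul, coeff_X_mul]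
      rw [ih2.2, coeff_eq_zero_of_natDegree_lt (lt_of_le_of_lt ih1.1 (by omega))]
      simp [pow_succ]
      ring

lemma sum_chebT_eq_zero : ∀ (m : ℕ) (v : ℕ → ℝ),
    (∑ j ∈ Finset.range (m + 1), C (v j) * T ℝ (j : ℤ)) = 0 → ∀ j ≤ m, v j = 0 := by
  intro m
  induction m with
  | zero =>
    intro v h j hj
    interval_cases j
    simpa [T_zero, Polynomial.C_eq_zero] using h
  | succ m ih =>
    intro v h j hj
    have hcoeff : ((∑ j ∈ Finset.range (m + 2), C (v j) * T ℝ (j : ℤ)).coeff (m + 1)) = 0 := by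
      rw [h]; simp
    rw [Polynomial.finset_sum_coeff] at hcoeff
    have hsplit : ∀ k ∈ Finset.range (m + 1), (C (v k) * T ℝ (k : ℤ)).coeff (m + 1) = 0 := by
      intro k hk
      have hk' : k < m + 1 := Finset.mem_range.mp hk
      apply coeff_eq_zero_of_natDegree_lt
      exact lt_of_le_of_lt (le_trans (natDegree_C_mul_le _ _) (chebT_deg_coeff k).1) hk'
    rw [Finset.sum_range_succ, Finset.sum_eq_zero hsplit, zero_add, coeff_C_mul,
      (chebT_deg_coeff (m + 1)).2] at hcoeff
    have hv : v (m + 1) = 0 := by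
      have : (2 : ℝ) ^ (m + 1 - 1) ≠ 0 := by positivity
      exact (mul_eq_zero.mp hcoeff).resolve_right this
    rcases Nat.lt_succ_iff_lt_or_eq.mp (Nat.lt_succ_of_le hj) with h' | h'
    · refine ih v ?_ j (by omega)
      rw [Finset.sum_range_succ, hv] at h
      simpa using h
    · rw [h']; exact hv

lemma xequi_injective {N : ℕ} (hN : 1 ≤ N) : Function.Injective (xequi N) := by
  intro i j h
  have hN' : (N : ℝ) ≠ 0 := Nat.cast_ne_zero.mpr (by omega)
  unfold xequi at h
  have : (i : ℝ) = (j : ℝ) := by field_simp at h; linarith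
  exact Fin.ext (by exact_mod_cast this)

lemma chebVand_mulVec_injective {N M : ℕ} (hMN : M ≤ N) (hN : 1 ≤ N)
    (v : Fin (M + 1) → ℝ) (hv : (chebVand N M).mulVec v = 0) : v = 0 := by
  set v' : ℕ → ℝ := fun j => if h : j < M + 1 then v ⟨j, h⟩ else 0 with hv'
  set p : ℝ[X] := ∑ j ∈ Finset.range (M + 1), C (v' j) * T ℝ (j : ℤ) with hp
  have heval : ∀ i : Fin (N + 1), p.eval (xequi N i) = 0 := by
    intro i
    have := congrFun hv i
    simp only [Matrix.mulVec, dotProduct, chebVand, Matrix.of_apply, Pi.zero_apply] at this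
    rw [hp, Polynomial.eval_finset_sum]
    rw [← this, ← Fin.sum_univ_eq_sum_range (fun j => _)]
    · apply Finset.sum_congr rfl
      intro k _
      simp [v', k.isLt, not_lt.mpr (Nat.lt_succ_iff.mp k.isLt), cheb, mul_comm]
  have hdeg : p.natDegree ≤ M := by
    apply Polynomial.natDegree_sum_le_of_forall_le
    intro j hj
    exact le_trans (le_trans (natDegree_C_mul_le _ _) (chebT_deg_coeff j).1)
      (Nat.lt_succ_iff.mp (Finset.mem_range.mp hj))
  have hp0 : p = 0 := by
    apply Polynomial.eq_zero_of_natDegree_lt_card_of_eval_eq_zero p (xequi_injective hN) heval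
    rw [Fintype.card_fin]
    omega
  have hz := sum_chebT_eq_zero M v' (hp ▸ hp0)
  funext k
  have := hz k (Nat.lt_succ_iff.mp k.isLt)
  simpa [v', k.isLt, Nat.lt_succ_iff.mp k.isLt] using this

lemma enorm2_nonneg {n : ℕ} (v : Fin n → ℝ) : 0 ≤ enorm2 v := Real.sqrt_nonneg _

lemma enorm2_sq {n : ℕ} (v : Fin n → ℝ) : (enorm2 v) ^ 2 = ∑ i, (v i) ^ 2 :=
  Real.sq_sqrt (Finset.sum_nonneg fun i _ => sq_nonneg _)

lemma enorm2_eq_zero {n : ℕ} {v : Fin n → ℝ} (h : enorm2 v = 0) : v = 0 := by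
  have h2 : ∑ i, (v i) ^ 2 = 0 := by
    have := enorm2_sq v; rw [h] at this; linarith [this]
  funext i
  have := (Finset.sum_eq_zero_iff_of_nonneg (fun i _ => sq_nonneg (v i))).mp h2 i (Finset.mem_univ i)
  exact pow_eq_zero_iff (by norm_num) |>.mp this

lemma enorm2_pos {n : ℕ} {v : Fin n → ℝ} (h : v ≠ 0) : 0 < enorm2 v :=
  lt_of_le_of_ne (enorm2_nonneg v) (fun h' => h (enorm2_eq_zero h'.symm))

lemma enorm2_smul {n : ℕ} (t : ℝ) (v : Fin n → ℝ) : enorm2 (t • v) = |t| * enorm2 v := by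
  unfold enorm2
  rw [← Real.sqrt_sq_eq_abs, ← Real.sqrt_mul (sq_nonneg t), Finset.mul_sum]
  congr 1
  apply Finset.sum_congr rfl
  intro i _
  simp [mul_pow]

lemma enorm2_eq_norm {n : ℕ} (v : EuclideanSpace ℝ (Fin n)) :
    enorm2 ((WithLp.equiv 2 (Fin n → ℝ)) v) = ‖v‖ := by
  rw [EuclideanSpace.norm_eq]
  unfold enorm2
  congr 1
  apply Finset.sum_congr rfl
  intro i _
  simp [Real.norm_eq_abs, sq_abs]

lemma sigmaMin_le' {m n : ℕ} (A : Matrix (Fin m) (Fin n) ℝ) (v : Fin n → ℝ)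
    (hv : enorm2 v = 1) : sigmaMin A ≤ enorm2 (A.mulVec v) := by
  apply csInf_le
  · exact ⟨0, fun r ⟨w, _, hr⟩ => hr ▸ enorm2_nonneg _⟩
  · exact ⟨v, hv, rfl⟩

lemma sigmaMin_mul_le {m n : ℕ} (A : Matrix (Fin m) (Fin n) ℝ) (d : Fin n → ℝ) (hd : d ≠ 0) :
    sigmaMin A * enorm2 d ≤ enorm2 (A.mulVec d) := by
  have hpos := enorm2_pos hd
  have hu : enorm2 ((enorm2 d)⁻¹ • d) = 1 := by
    rw [enorm2_smul, abs_of_pos (by positivity), inv_mul_cancel₀ (ne_of_gt hpos)]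
  have h := sigmaMin_le' A _ hu
  rw [Matrix.mulVec_smul, enorm2_smul, abs_of_pos (by positivity)] at h
  calc sigmaMin A * enorm2 d ≤ ((enorm2 d)⁻¹ * enorm2 (A.mulVec d)) * enorm2 d :=
        mul_le_mul_of_nonneg_right h (le_of_lt hpos)
    _ = enorm2 (A.mulVec d) := by field_simp

lemma sigmaMin_chebVand_pos {N M : ℕ} (hMN : M ≤ N) (hN : 1 ≤ N) :
    0 < sigmaMin (chebVand N M) := by
  set E := EuclideanSpace ℝ (Fin (M + 1))
  set φ : E → ℝ := fun v => enorm2 ((chebVand N M).mulVec ((WithLp.equiv 2 (Fin (M+1) → ℝ)) v)) with hφ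
  have hcont : Continuous φ := by
    unfold φ
    unfold enorm2
    apply Real.continuous_sqrt.comp
    apply continuous_finset_sum
    intro i _
    apply Continuous.pow
    unfold Matrix.mulVec dotProduct
    apply continuous_finset_sum
    intro j _
    exact (continuous_const.mul ((EuclideanSpace.proj j).continuous))
  have hsph : IsCompact (Metric.sphere (0 : E) 1) := isCompact_sphere 0 1
  have hne : (Metric.sphere (0 : E) 1).Nonempty := by
    apply NormedSpace.sphere_nonempty.mpr
    norm_num
  obtain ⟨x₀, hx₀mem, hx₀⟩ := hsph.exists_sInf_image_eq hne hcont.continuousOn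
  have hset : {r | ∃ v : Fin (M+1) → ℝ, enorm2 v = 1 ∧ r = enorm2 ((chebVand N M).mulVec v)}
      = φ '' (Metric.sphere (0 : E) 1) := by
    ext r
    constructor
    · rintro ⟨v, hv1, rfl⟩
      refine ⟨(WithLp.equiv 2 (Fin (M+1) → ℝ)).symm v, ?_, ?_⟩
      · rw [mem_sphere_zero_iff_norm, ← enorm2_eq_norm]
        simpa using hv1
      · simp [φ]
    · rintro ⟨w, hw, rfl⟩
      refine ⟨(WithLp.equiv 2 (Fin (M+1) → ℝ)) w, ?_, rfl⟩
      rw [enorm2_eq_norm]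
      exact mem_sphere_zero_iff_norm.mp hw
  rw [sigmaMin, hset, hx₀]
  apply enorm2_pos
  intro hcontra
  have : (WithLp.equiv 2 (Fin (M+1) → ℝ)) x₀ = 0 :=
    chebVand_mulVec_injective hMN hN _ hcontra
  have hx0 : x₀ = 0 := by
    apply (WithLp.equiv 2 (Fin (M+1) → ℝ)).injective
    simpa using this
  rw [hx0] at hx₀mem
  simp at hx₀mem

lemma cheb_abs_le (n : ℕ) {x : ℝ} (hx : x ∈ Set.Icc (-1 : ℝ) 1) : |cheb n x| ≤ 1 := by
  obtain ⟨h1, h2⟩ := hx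
  have : x = Real.cos (Real.arccos x) := (Real.cos_arccos h1 h2).symm
  rw [cheb, this, Polynomial.Chebyshev.T_real_cos]
  exact Real.abs_cos_le_one _

lemma tail_bound (ρ Q : ℝ) (hρ : 1 < ρ) (M : ℕ)
    (f : ℝ → ℝ) (a : ℕ → ℝ)
    (hf : ∀ x ∈ Set.Icc (-1 : ℝ) 1, HasSum (fun n : ℕ => a n * cheb n x) (f x))
    (ha : ∀ n : ℕ, 1 ≤ n → |a n| ≤ 2 * Q * ρ ^ (-(n : ℤ)))
    {x : ℝ} (hx : x ∈ Set.Icc (-1 : ℝ) 1) :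
    |f x - ∑ k ∈ Finset.range (M + 1), a k * cheb k x| ≤ 2 * Q * (ρ ^ (-(M : ℤ)) / (ρ - 1)) := by
  have hρ0 : (0 : ℝ) < ρ := lt_trans one_pos hρ
  have hρ1 : ρ - 1 ≠ 0 := by linarith
  have hS := hf x hx
  have htail : HasSum (fun n : ℕ => a (n + (M + 1)) * cheb (n + (M + 1)) x)
      (f x - ∑ i ∈ Finset.range (M + 1), a i * cheb i x) :=
    ((hasSum_nat_add_iff' (M + 1)).mpr hS)
  set b : ℕ → ℝ := fun n => (2 * Q * ρ ^ (-(M + 1 : ℤ))) * (ρ⁻¹) ^ n with hb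
  have hgeo : HasSum b ((2 * Q * ρ ^ (-(M + 1 : ℤ))) * (1 - ρ⁻¹)⁻¹) := by
    apply HasSum.mul_left
    apply hasSum_geometric_of_lt_one (by positivity)
    rw [inv_lt_one_iff₀]; right; exact hρ
  have hBval : (2 * Q * ρ ^ (-(M + 1 : ℤ))) * (1 - ρ⁻¹)⁻¹ = 2 * Q * (ρ ^ (-(M : ℤ)) / (ρ - 1)) := by
    have h1 : ρ ^ (-(M + 1 : ℤ)) = ρ ^ (-(M : ℤ)) * ρ⁻¹ := by
      rw [← _root_.zpow_neg_one, ← zpow_add₀ (ne_of_gt hρ0)]; ring_nf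
    rw [h1]
    have h2 : (1 - ρ⁻¹)⁻¹ = ρ / (ρ - 1) := by
      rw [eq_div_iff hρ1]
      field_simp
    rw [h2]
    field_simp
  rw [← hBval]
  have hbound : ∀ n : ℕ, |a (n + (M + 1)) * cheb (n + (M + 1)) x| ≤ b n := by
    intro n
    rw [abs_mul]
    have h1 : |a (n + (M + 1))| ≤ 2 * Q * ρ ^ (-((n + (M + 1) : ℕ)) : ℤ) := ha _ (by omega)
    have h2 : |cheb (n + (M + 1)) x| ≤ 1 := cheb_abs_le _ hx
    have h3 : 2 * Q * ρ ^ (-((n + (M + 1) : ℕ)) : ℤ) ≤ b n := by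
      rw [hb]
      simp only []
      have : ρ ^ (-((n + (M + 1) : ℕ)) : ℤ) = ρ ^ (-(M + 1 : ℤ)) * (ρ⁻¹) ^ n := by
        rw [inv_pow, ← zpow_natCast ρ n, ← _root_.zpow_neg, ← zpow_add₀ (ne_of_gt hρ0)]
        congr 1
        push_cast
        ring
      rw [this]; ring_nf; rfl
    calc |a (n + (M + 1))| * |cheb (n + (M + 1)) x| ≤ |a (n + (M + 1))| * 1 :=
          mul_le_mul_of_nonneg_left h2 (abs_nonneg _)
      _ = |a (n + (M + 1))| := mul_one _
      _ ≤ _ := le_trans h1 h3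
  rw [abs_le]
  constructor
  · have := hasSum_le (fun n => neg_abs_le _ |>.trans' (neg_le_neg (hbound n))) hgeo.neg htail
    linarith [this]
  · exact hasSum_le (fun n => (le_abs_self _).trans (hbound n)) htail hgeo

lemma dot_le_enorm2 {n : ℕ} (u v : Fin n → ℝ) :
    dotProduct u v ≤ enorm2 u * enorm2 v := by
  have hcs := Finset.sum_mul_sq_le_sq_mul_sq Finset.univ u v
  have h1 := enorm2_sq u
  have h2 := enorm2_sq v
  have h3 := enorm2_nonneg u
  have h4 := enorm2_nonneg v
  unfold dotProduct
  have h5 : (∑ i, u i * v i) ^ 2 ≤ (enorm2 u * enorm2 v) ^ 2 := by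
    rw [mul_pow, h1, h2]; exact hcs
  calc ∑ i, u i * v i ≤ |∑ i, u i * v i| := le_abs_self _
    _ = Real.sqrt ((∑ i, u i * v i) ^ 2) := (Real.sqrt_sq_eq_abs _).symm
    _ ≤ Real.sqrt ((enorm2 u * enorm2 v) ^ 2) := Real.sqrt_le_sqrt h5
    _ = enorm2 u * enorm2 v := Real.sqrt_sq (by positivity)

end Helpers


set_option maxHeartbeats 1000000 in
/-- **Corollary 5.3 of the paper**: least squares fitting with deterministic
perturbations of size at most `ε` satisfies
`sup_{x∈[-1,1]} |f(x) − p_M(x)| ≤ 2Q [1 + (M+1)√(N+1)/σ_{M+1}] ρ^{-M}/(ρ−1)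
+ (M+1)√(N+1) ε / σ_{M+1}`, where `σ_{M+1} = σ_{M+1}(T_M(x^equi))`. -/
theorem least_squares_deterministic_perturbation (ρ Q ε : ℝ) (hρ : 1 < ρ) (hQ : 0 < Q)
    (hε : 0 ≤ ε) (M N : ℕ) (hMN : M ≤ N) (hN : 1 ≤ N)
    (f : ℝ → ℝ) (a : ℕ → ℝ)
    (hf : ∀ x ∈ Set.Icc (-1 : ℝ) 1, HasSum (fun n : ℕ => a n * cheb n x) (f x))
    (ha0 : |a 0| ≤ Q)
    (ha : ∀ n : ℕ, 1 ≤ n → |a n| ≤ 2 * Q * ρ ^ (-(n : ℤ)))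
    (εvec : Fin (N + 1) → ℝ) (hεvec : ∀ i, |εvec i| ≤ ε)
    (c : Fin (M + 1) → ℝ)
    (hc : ((chebVand N M).transpose * chebVand N M) *ᵥ c =
      (chebVand N M).transpose *ᵥ (fun i => f (xequi N i) + εvec i)) :
    ∀ x ∈ Set.Icc (-1 : ℝ) 1,
      |f x - ∑ k : Fin (M + 1), c k * cheb (k : ℕ) x| ≤
        2 * Q * (1 + ((M : ℝ) + 1) * Real.sqrt ((N : ℝ) + 1) / sigmaMin (chebVand N M)) *
            (ρ ^ (-(M : ℤ)) / (ρ - 1)) +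
          ((M : ℝ) + 1) * Real.sqrt ((N : ℝ) + 1) * ε / sigmaMin (chebVand N M) := by
  intro x hx
  set A := chebVand N M with hA
  set σ := sigmaMin A with hσdef
  have hσ : 0 < σ := sigmaMin_chebVand_pos hMN hN
  have hρ0 : (0 : ℝ) < ρ := lt_trans one_pos hρ
  set t : ℝ := 2 * Q * (ρ ^ (-(M : ℤ)) / (ρ - 1)) with ht
  have ht0 : 0 ≤ t := by
    have : (0:ℝ) < ρ ^ (-(M : ℤ)) := zpow_pos hρ0 _
    have : (0:ℝ) < ρ - 1 := by linarith
    positivity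
  set astar : Fin (M + 1) → ℝ := fun k => a k with hastar
  set d : Fin (M + 1) → ℝ := fun k => c k - astar k with hd
  set r : Fin (N + 1) → ℝ := fun i => f (xequi N i) + εvec i - (A.mulVec astar) i with hr
  -- grid points in [-1, 1]
  have hxin : ∀ i : Fin (N + 1), xequi N i ∈ Set.Icc (-1 : ℝ) 1 := by
    intro i
    have h0 : (0 : ℝ) ≤ (i : ℝ) := Nat.cast_nonneg _
    have h1 : (i : ℝ) ≤ (N : ℝ) := by
      have : (i : ℕ) ≤ N := Nat.lt_succ_iff.mp i.isLt
      exact_mod_cast this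
    have hNpos : (0 : ℝ) < (N : ℝ) := by exact_mod_cast hN
    constructor
    · unfold xequi
      have hnn : (0:ℝ) ≤ 2 * (i : ℝ) / (N : ℝ) := by positivity
      linarith
    · unfold xequi
      have hle : 2 * (i : ℝ) / (N : ℝ) ≤ 2 := by
        rw [div_le_iff₀ hNpos]; nlinarith
      linarith
  -- A *ᵥ astar is the partial sum at grid points
  have hAastar : ∀ i : Fin (N + 1), (A.mulVec astar) i
      = ∑ k ∈ Finset.range (M + 1), a k * cheb k (xequi N i) := by
    intro i
    rw [← Fin.sum_univ_eq_sum_range (fun k => a k * cheb k (xequi N i))]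
    simp only [Matrix.mulVec, dotProduct, hA, chebVand, Matrix.of_apply]
    apply Finset.sum_congr rfl
    intro k _
    simp [hastar, mul_comm]
  -- residual bound
  have hrle : ∀ i, |r i| ≤ t + ε := by
    intro i
    rw [hr]
    simp only []
    have := tail_bound ρ Q hρ M f a hf ha (hxin i)
    rw [← hAastar i] at this
    calc |f (xequi N i) + εvec i - A.mulVec astar i|
        = |(f (xequi N i) - A.mulVec astar i) + εvec i| := by ring_nf
      _ ≤ |f (xequi N i) - A.mulVec astar i| + |εvec i| := abs_add_le _ _
      _ ≤ t + ε := add_le_add this (hεvec i)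
  -- enorm2 r bound
  have her : enorm2 r ≤ Real.sqrt ((N : ℝ) + 1) * (t + ε) := by
    have hte : 0 ≤ t + ε := by linarith
    have hsum : ∑ i, (r i) ^ 2 ≤ ((N : ℝ) + 1) * (t + ε) ^ 2 := by
      calc ∑ i, (r i) ^ 2 ≤ ∑ _i : Fin (N+1), (t + ε) ^ 2 := by
            apply Finset.sum_le_sum
            intro i _
            have := hrle i
            nlinarith [abs_nonneg (r i), sq_abs (r i)]
        _ = ((N : ℝ) + 1) * (t + ε) ^ 2 := by
            rw [Finset.sum_const, Finset.card_univ, Fintype.card_fin]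
            push_cast; ring
    calc enorm2 r ≤ Real.sqrt (((N : ℝ) + 1) * (t + ε) ^ 2) := Real.sqrt_le_sqrt hsum
      _ = Real.sqrt ((N : ℝ) + 1) * (t + ε) := by
          rw [Real.sqrt_mul (by positivity), Real.sqrt_sq hte]
  -- normal equations => (Aᵀ A) d = Aᵀ r
  have hnorm : (A.transpose * A).mulVec d = A.transpose.mulVec r := by
    have h1 : d = c - astar := by funext k; simp [hd]
    have h2 : r = (fun i => f (xequi N i) + εvec i) - A.mulVec astar := by
      funext i; simp [hr]
    rw [h1, h2, Matrix.mulVec_sub, Matrix.mulVec_sub, hc, ← Matrix.mulVec_mulVec]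
  -- key inequality : enorm2 d ≤ enorm2 r / σ
  have hkey : enorm2 d ≤ enorm2 r / σ := by
    by_cases hd0 : d = 0
    · rw [hd0]
      have : enorm2 (0 : Fin (M+1) → ℝ) = 0 := by
        simp [enorm2]
      rw [this]
      exact div_nonneg (enorm2_nonneg r) (le_of_lt hσ)
    · have h5 : σ * enorm2 d ≤ enorm2 (A.mulVec d) := sigmaMin_mul_le A d hd0
      set u := A.mulVec d with hu
      have e1 : (enorm2 u) ^ 2 = dotProduct u u := by
        rw [enorm2_sq]
        unfold dotProduct
        apply Finset.sum_congr rfl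
        intro i _
        ring
      have e2 : dotProduct u u = dotProduct u r := by
        have l1 : dotProduct d ((A.transpose * A).mulVec d) = dotProduct u u := by
          rw [← Matrix.mulVec_mulVec, dotProduct_mulVec, Matrix.vecMul_transpose]
        have l2 : dotProduct d (A.transpose.mulVec r) = dotProduct u r := by
          rw [dotProduct_mulVec, Matrix.vecMul_transpose]
        rw [← l1, ← l2, hnorm]
      have e3 : dotProduct u r ≤ enorm2 u * enorm2 r := dot_le_enorm2 u r
      have e4 : (enorm2 u) ^ 2 ≤ enorm2 u * enorm2 r := by rw [e1, e2]; exact e3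
      have hu0 : 0 ≤ enorm2 u := enorm2_nonneg u
      have hr0 : 0 ≤ enorm2 r := enorm2_nonneg r
      rw [le_div_iff₀ hσ]
      rcases eq_or_lt_of_le hu0 with h | h
      · nlinarith
      · have : enorm2 u ≤ enorm2 r := by nlinarith
        nlinarith
  -- l1-l2 bound
  have hl1 : ∑ k : Fin (M + 1), |d k| ≤ Real.sqrt ((M : ℝ) + 1) * enorm2 d := by
    have hcs := Finset.sum_mul_sq_le_sq_mul_sq Finset.univ (fun k : Fin (M+1) => |d k|)
      (fun _ => (1:ℝ))
    simp only [mul_one, one_pow, sq_abs] at hcs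
    have hSnn : (0:ℝ) ≤ ∑ k : Fin (M + 1), |d k| := Finset.sum_nonneg fun k _ => abs_nonneg _
    have hcard : (∑ _k : Fin (M+1), (1:ℝ)) = (M : ℝ) + 1 := by
      rw [Finset.sum_const, Finset.card_univ, Fintype.card_fin, nsmul_eq_mul, mul_one]
      push_cast; ring
    rw [hcard] at hcs
    have h5 : (∑ k : Fin (M+1), |d k|) ^ 2 ≤ (Real.sqrt ((M : ℝ) + 1) * enorm2 d) ^ 2 := by
      rw [mul_pow, Real.sq_sqrt (by positivity : (0:ℝ) ≤ (M:ℝ)+1), enorm2_sq]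
      calc (∑ k : Fin (M+1), |d k|) ^ 2 ≤ (∑ k : Fin (M+1), (d k)^2) * ((M:ℝ)+1) := hcs
        _ = ((M:ℝ)+1) * ∑ k : Fin (M+1), (d k)^2 := by ring
    calc ∑ k : Fin (M+1), |d k| = Real.sqrt ((∑ k : Fin (M+1), |d k|) ^ 2) :=
          (Real.sqrt_sq hSnn).symm
      _ ≤ Real.sqrt ((Real.sqrt ((M : ℝ) + 1) * enorm2 d) ^ 2) := Real.sqrt_le_sqrt h5
      _ = Real.sqrt ((M : ℝ) + 1) * enorm2 d :=
          Real.sqrt_sq (mul_nonneg (Real.sqrt_nonneg _) (enorm2_nonneg d))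
  -- first triangle piece
  have hT1 : |f x - ∑ k : Fin (M + 1), astar k * cheb (k : ℕ) x| ≤ t := by
    rw [Fin.sum_univ_eq_sum_range (fun k => a k * cheb k x)]
    exact tail_bound ρ Q hρ M f a hf ha hx
  have hT2 : |∑ k : Fin (M + 1), astar k * cheb (k : ℕ) x
      - ∑ k : Fin (M + 1), c k * cheb (k : ℕ) x| ≤ ∑ k : Fin (M + 1), |d k| := by
    rw [← Finset.sum_sub_distrib]
    calc |∑ k : Fin (M+1), (astar k * cheb (k:ℕ) x - c k * cheb (k:ℕ) x)|
        ≤ ∑ k : Fin (M+1), |astar k * cheb (k:ℕ) x - c k * cheb (k:ℕ) x| :=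
          Finset.abs_sum_le_sum_abs _ _
      _ ≤ ∑ k : Fin (M + 1), |d k| := by
          apply Finset.sum_le_sum
          intro k _
          have : astar k * cheb (k:ℕ) x - c k * cheb (k:ℕ) x = -(d k) * cheb (k:ℕ) x := by
            simp [hd]; ring
          rw [this, abs_mul, abs_neg]
          calc |d k| * |cheb (k:ℕ) x| ≤ |d k| * 1 :=
                mul_le_mul_of_nonneg_left (cheb_abs_le _ hx) (abs_nonneg _)
            _ = |d k| := mul_one _
  -- assemble
  set K : ℝ := ((M : ℝ) + 1) * Real.sqrt ((N : ℝ) + 1) with hK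
  have hsqrtM : Real.sqrt ((M : ℝ) + 1) ≤ (M : ℝ) + 1 := by
    have : ((M:ℝ)+1) ≤ ((M:ℝ)+1)^2 := by nlinarith [Nat.cast_nonneg (α := ℝ) M]
    calc Real.sqrt ((M:ℝ)+1) ≤ Real.sqrt (((M:ℝ)+1)^2) := Real.sqrt_le_sqrt this
      _ = (M:ℝ)+1 := Real.sqrt_sq (by positivity)
  have hchain : ∑ k : Fin (M + 1), |d k| ≤ K * (t + ε) / σ := by
    have s1 : Real.sqrt ((M : ℝ) + 1) * enorm2 d ≤ Real.sqrt ((M : ℝ) + 1) * (enorm2 r / σ) :=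
      mul_le_mul_of_nonneg_left hkey (Real.sqrt_nonneg _)
    have s2 : Real.sqrt ((M : ℝ) + 1) * (enorm2 r / σ)
        ≤ Real.sqrt ((M : ℝ) + 1) * (Real.sqrt ((N : ℝ) + 1) * (t + ε) / σ) := by
      apply mul_le_mul_of_nonneg_left _ (Real.sqrt_nonneg _)
      exact div_le_div_of_nonneg_right her hσ.le |>.trans_eq rfl
    have s3 : Real.sqrt ((M : ℝ) + 1) * (Real.sqrt ((N : ℝ) + 1) * (t + ε) / σ)
        ≤ ((M : ℝ) + 1) * (Real.sqrt ((N : ℝ) + 1) * (t + ε) / σ) := by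
      apply mul_le_mul_of_nonneg_right hsqrtM
      have hte : 0 ≤ t + ε := by linarith
      positivity
    calc ∑ k : Fin (M + 1), |d k| ≤ Real.sqrt ((M : ℝ) + 1) * enorm2 d := hl1
      _ ≤ _ := le_trans s1 (le_trans s2 s3)
      _ = K * (t + ε) / σ := by rw [hK]; ring
  have hfinal : |f x - ∑ k : Fin (M + 1), c k * cheb (k : ℕ) x| ≤ t + K * (t + ε) / σ := by
    calc |f x - ∑ k : Fin (M + 1), c k * cheb (k : ℕ) x|
        ≤ |f x - ∑ k : Fin (M + 1), astar k * cheb (k : ℕ) x|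
          + |∑ k : Fin (M + 1), astar k * cheb (k : ℕ) x - ∑ k : Fin (M + 1), c k * cheb (k : ℕ) x| := by
          have := abs_sub_le (f x) (∑ k : Fin (M + 1), astar k * cheb (k : ℕ) x)
            (∑ k : Fin (M + 1), c k * cheb (k : ℕ) x)
          exact this
      _ ≤ t + K * (t + ε) / σ := add_le_add hT1 (le_trans hT2 hchain)
  have hRHS : 2 * Q * (1 + K / σ) * (ρ ^ (-(M : ℤ)) / (ρ - 1)) + K * ε / σ
      = t + K * (t + ε) / σ := by
    have hσne : σ ≠ 0 := ne_of_gt hσ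
    have hρ1 : ρ - 1 ≠ 0 := by linarith
    rw [ht]
    field_simp [hσne]
    ring
  calc |f x - ∑ k : Fin (M + 1), c k * cheb (k : ℕ) x| ≤ t + K * (t + ε) / σ := hfinal
    _ = 2 * Q * (1 + K / σ) * (ρ ^ (-(M : ℤ)) / (ρ - 1)) + K * ε / σ := hRHS.symm
    _ = _ := by rw [hK]
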